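/- Let R and S be rings and let F be an equivalence from the category of right R-modules to the category of right S-modules. If U is an essential submodule of a right R-module M and ι : U → M is the inclusion, then F(ι) is a monomorphism whose image is an essential submodule of F(M). -/

import Mathlib

open MulOpposite

section Defs

variable (R : Type*) [Ring R]

/-- The right annihilator of an element of a right `R`-module (a module over `Rᵐᵒᵖ`),
as a right ideal of `R`. -/
def RightAnn (M : Type*) [AddCommGroup M] [Module Rᵐᵒᵖ M] (x : M) : Submodule Rᵐᵒᵖ R where
  carrier := {r : R | op r • x = 0}
  zero_mem' := by simp
  add_mem' := by
    intro a b ha hb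
    simp only [Set.mem_setOf_eq] at *
    rw [op_add, add_smul, ha, hb, add_zero]
  smul_mem' := by
    intro c a ha
    simp only [Set.mem_setOf_eq] at *
    have h1 : c • a = a * unop c := rfl
    rw [h1, op_mul, op_unop, mul_smul, ha, smul_zero]

/-- The right annihilator of a subset of `R`, as a set. -/
def rightAnnSet (A : Set R) : Set R := {r : R | ∀ a ∈ A, a * r = 0}

/-- The left annihilator of a subset of `R`, as a set. -/
def leftAnnSet (A : Set R) : Set R := {r : R | ∀ a ∈ A, r * a = 0}

/-- A submodule is essential if it intersects every nonzero submodule nontrivially. -/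
def IsEssentialSubmodule {A : Type*} [Ring A] {M : Type*} [AddCommGroup M] [Module A M]
    (U : Submodule A M) : Prop :=
  ∀ V : Submodule A M, U ⊓ V = ⊥ → V = ⊥

/-- A right `R`-module is non-singular if its singular submodule is zero, i.e. no
nonzero element has essential right annihilator. -/
def IsNonsingularMod (M : Type*) [AddCommGroup M] [Module Rᵐᵒᵖ M] : Prop :=
  ∀ x : M, IsEssentialSubmodule (RightAnn R M x) → x = 0

/-- A right `R`-module is singular if every element has essential right annihilator. -/
def IsSingularMod (M : Type*) [AddCommGroup M] [Module Rᵐᵒᵖ M] : Prop :=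
  ∀ x : M, IsEssentialSubmodule (RightAnn R M x)

/-- Hattori torsion-freeness for right `R`-modules. -/
def HattoriTorsionFree (M : Type*) [AddCommGroup M] [Module Rᵐᵒᵖ M] : Prop :=
  ∀ (x : M) (r : R), op r • x = 0 →
    ∃ (k : ℕ) (xs : Fin k → M) (rs : Fin k → R),
      x = ∑ i, op (rs i) • xs i ∧ ∀ i, rs i * r = 0

/-- A ring is torsion-free if every finitely generated right ideal is a torsion-free
right `R`-module. -/
def IsTorsionFreeRing : Prop :=
  ∀ I : Submodule Rᵐᵒᵖ R, I.FG → HattoriTorsionFree R I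

/-- A ring is a right p.p.-ring if every principal right ideal is projective. -/
def IsRightPPRing : Prop :=
  ∀ x : R, Module.Projective Rᵐᵒᵖ (Submodule.span Rᵐᵒᵖ ({x} : Set R))

/-- A ring is a left p.p.-ring if every principal left ideal is projective. -/
def IsLeftPPRing : Prop :=
  ∀ x : R, Module.Projective R (Submodule.span R ({x} : Set R))

/-- A ring is right semi-hereditary if every finitely generated right ideal is projective. -/
def IsRightSemihereditary : Prop :=
  ∀ I : Submodule Rᵐᵒᵖ R, I.FG → Module.Projective Rᵐᵒᵖ I

/-- `R` contains no infinite set of (nonzero, pairwise) orthogonal idempotents. -/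
def NoInfiniteOrthogonalIdempotents : Prop :=
  ∀ S : Set R, (∀ e ∈ S, e * e = e ∧ e ≠ 0) →
    (∀ e ∈ S, ∀ f ∈ S, e ≠ f → e * f = 0 ∧ f * e = 0) → S.Finite

/-- A ring is Baer if the right annihilator of every subset is generated, as a right
ideal, by an idempotent. -/
def IsBaerRing : Prop :=
  ∀ A : Set R, ∃ e : R, e * e = e ∧ rightAnnSet R A = {y : R | ∃ r : R, y = e * r}

/-- A ring is right Utumi if it is right non-singular and every S-closed right ideal
is a right annihilator. -/
def IsRightUtumi : Prop :=
  IsNonsingularMod R R ∧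
    ∀ I : Submodule Rᵐᵒᵖ R, IsNonsingularMod R (R ⧸ I) →
      ∃ A : Set R, (I : Set R) = rightAnnSet R A

/-- The left annihilator of an element of a left `R`-module, as a left ideal of `R`. -/
def LeftAnn (M : Type*) [AddCommGroup M] [Module R M] (x : M) : Submodule R R :=
  LinearMap.ker (LinearMap.toSpanSingleton R M x)

/-- A left `R`-module is non-singular if no nonzero element has essential left annihilator. -/
def IsLeftNonsingularMod (M : Type*) [AddCommGroup M] [Module R M] : Prop :=
  ∀ x : M, IsEssentialSubmodule (LeftAnn R M x) → x = 0

/-- A ring is left Utumi if it is left non-singular and every S-closed left ideal is a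
left annihilator. -/
def IsLeftUtumi : Prop :=
  IsLeftNonsingularMod R R ∧
    ∀ I : Submodule R R, IsLeftNonsingularMod R (R ⧸ I) →
      ∃ A : Set R, (I : Set R) = leftAnnSet R A

end Defs

open CategoryTheory


/-- A categorical characterization of essentiality of the range of an injective map. -/
lemma essential_range_iff {T : Type u} [Ring T] {A M : ModuleCat.{u} T} (f : A ⟶ M)
    (hf : Function.Injective f.hom) :
    IsEssentialSubmodule (LinearMap.range f.hom) ↔
      ∀ (N : ModuleCat.{u} T) (g : M ⟶ N), Function.Injective (f ≫ g).hom →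
        Function.Injective g.hom := by
  constructor
  · intro hess N g hgf
    rw [← LinearMap.ker_eq_bot]
    apply hess
    rw [eq_bot_iff]
    rintro x ⟨⟨a, rfl⟩, (hx : g.hom (f.hom a) = 0)⟩
    have h0 : (f ≫ g).hom a = (f ≫ g).hom 0 := by simpa using hx
    have := hgf h0
    simp [this]
  · intro h V hV
    have hinj : Function.Injective (f ≫ ModuleCat.ofHom V.mkQ).hom := by
      rw [← LinearMap.ker_eq_bot, eq_bot_iff]
      intro a ha
      have ha' : V.mkQ (f.hom a) = 0 := ha
      have h1 : f.hom a ∈ V := by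
        rwa [← Submodule.Quotient.mk_eq_zero, ← Submodule.mkQ_apply]
      have h2 : f.hom a ∈ LinearMap.range f.hom ⊓ V := ⟨⟨a, rfl⟩, h1⟩
      rw [hV] at h2
      have h3 : f.hom a = f.hom 0 := by simpa using (h2 : f.hom a ∈ (⊥ : Submodule T M))
      simpa using hf h3
    have := h _ (ModuleCat.ofHom V.mkQ) hinj
    rw [← LinearMap.ker_eq_bot] at this
    have h4 : LinearMap.ker V.mkQ = ⊥ := this
    rwa [Submodule.ker_mkQ] at h4

/-- If `F` is an equivalence from right `R`-modules to right `S`-modules and `U` is an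
essential submodule of a right `R`-module `M` with inclusion `ι : U → M`, then `F(ι)` is
a monomorphism whose image is an essential submodule of `F(M)`. -/
theorem stmt_16 (R : Type u) (S : Type u) [Ring R] [Ring S]
    (F : ModuleCat.{u} Rᵐᵒᵖ ⥤ ModuleCat.{u} Sᵐᵒᵖ) [F.IsEquivalence]
    (M : ModuleCat.{u} Rᵐᵒᵖ) (U : Submodule Rᵐᵒᵖ M)
    (hU : IsEssentialSubmodule U) :
    Function.Injective (F.map (ModuleCat.ofHom U.subtype)).hom ∧
      IsEssentialSubmodule (LinearMap.range (F.map (ModuleCat.ofHom U.subtype)).hom) := by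
  let A : ModuleCat.{u} Rᵐᵒᵖ := ModuleCat.of Rᵐᵒᵖ U
  let ι : A ⟶ M := ModuleCat.ofHom U.subtype
  have hι : Function.Injective ι.hom := Submodule.injective_subtype U
  have hmonoι : Mono ι := (ModuleCat.mono_iff_injective ι).2 hι
  have hFpm : F.PreservesMonomorphisms :=
    Functor.preservesMonomorphisms_of_adjunction F.asEquivalence.symm.toAdjunction
  have hmono : Mono (F.map ι) := F.map_mono ι
  have hinj : Function.Injective (F.map ι).hom := (ModuleCat.mono_iff_injective _).1 hmono
  refine ⟨hinj, ?_⟩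
  rw [essential_range_iff _ hinj]
  intro N g hgf
  let e : F.obj (F.inv.obj N) ≅ N := F.asEquivalence.counitIso.app N
  have heinv : Function.Injective e.inv.hom :=
    (ModuleCat.mono_iff_injective e.inv).1 inferInstance
  have hehom : Function.Injective e.hom.hom :=
    (ModuleCat.mono_iff_injective e.hom).1 inferInstance
  let g' : M ⟶ F.inv.obj N := F.preimage ((g ≫ e.inv))
  have hg' : F.map g' = g ≫ e.inv := F.map_preimage _
  have h1 : Function.Injective (F.map (ι ≫ g')).hom := by
    rw [F.map_comp, hg']
    have : ⇑(F.map ι ≫ (g ≫ e.inv)).hom = ⇑e.inv.hom ∘ ⇑(F.map ι ≫ g).hom := by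
      ext x; rfl
    rw [this]
    exact heinv.comp hgf
  have hcomp : Function.Injective (ι ≫ g').hom :=
    (ModuleCat.mono_iff_injective (ι ≫ g')).1
      ((F.mono_map_iff_mono _).1 ((ModuleCat.mono_iff_injective _).2 h1))
  have hUe : IsEssentialSubmodule (LinearMap.range ι.hom) := by
    show IsEssentialSubmodule (LinearMap.range U.subtype)
    rwa [Submodule.range_subtype]
  have hg'inj : Function.Injective g'.hom :=
    (essential_range_iff ι hι).1 hUe _ g' hcomp
  have : Mono g' := (ModuleCat.mono_iff_injective g').2 hg'inj
  have hFg' : Function.Injective (F.map g').hom :=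
    (ModuleCat.mono_iff_injective _).1 (F.map_mono g')
  have hgeq : ⇑g.hom = ⇑e.hom.hom ∘ ⇑(F.map g').hom := by
    rw [hg']
    ext x
    show g.hom x = (e.inv ≫ e.hom).hom (g.hom x)
    rw [e.inv_hom_id]
    rfl
  rw [hgeq]
  exact hehom.comp hFg'
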